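/- Let s and T be positive integers and let a : Fin (3*s) → ℕ satisfy 4 * a i > T and 2 * a i < T for every i, and ∑_{i} a i = s * T. Suppose S : Fin s → Finset (Fin (3*s)) is a family of pairwise disjoint sets whose union is all of Fin (3*s), such that ∑_{i ∈ S b} (a i + 1) ≤ T + 3 for every b. Then for every b, the set S b has exactly 3 elements and ∑_{i ∈ S b} a i = T; in particular the family S is a solution of the 3-Partition instance (a, T). -/

import Mathlib

theorem soundness_core (s T : ℕ) (hs : 0 < s) (hT : 0 < T)
    (a : Fin (3 * s) → ℕ)
    (hlow : ∀ i, 4 * a i > T) (hhigh : ∀ i, 2 * a i < T)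
    (hsum : ∑ i, a i = s * T)
    (S : Fin s → Finset (Fin (3 * s)))
    (hdisj : ∀ b b', b ≠ b' → Disjoint (S b) (S b'))
    (hcover : ∀ i, ∃ b, i ∈ S b)
    (hle : ∀ b, ∑ i ∈ S b, (a i + 1) ≤ T + 3) :
    ∀ b, (S b).card = 3 ∧ ∑ i ∈ S b, a i = T := by
  -- the buckets form a partition
  have hU : (Finset.univ : Finset (Fin s)).biUnion S = Finset.univ := by
    ext i
    simp only [Finset.mem_biUnion, Finset.mem_univ, true_and, iff_true]
    exact hcover i
  have hpd : ∀ b ∈ (Finset.univ : Finset (Fin s)), ∀ b' ∈ Finset.univ, b ≠ b' →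
      Disjoint (S b) (S b') := fun b _ b' _ h => hdisj b b' h
  have htot : ∑ b, ∑ i ∈ S b, (a i + 1) = s * (T + 3) := by
    rw [← Finset.sum_biUnion hpd, hU, Finset.sum_add_distrib, hsum]
    simp [Finset.card_univ, mul_add]
    ring
  -- each bucket has sum exactly T + 3
  have heq : ∀ b, ∑ i ∈ S b, (a i + 1) = T + 3 := by
    have := (Finset.sum_eq_sum_iff_of_le (s := (Finset.univ : Finset (Fin s)))
      (f := fun b => ∑ i ∈ S b, (a i + 1))
      (g := fun _ => T + 3) (fun b _ => hle b)).mp ?_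
    · exact fun b => this b (Finset.mem_univ b)
    · rw [htot, Finset.sum_const, Finset.card_univ, Fintype.card_fin, smul_eq_mul]
  intro b
  have hb := heq b
  -- card ≤ 3
  have hcard_le : (S b).card ≤ 3 := by
    by_contra h
    push_neg at h
    obtain ⟨t, hts, htc⟩ := Finset.exists_subset_card_eq (show 4 ≤ (S b).card by omega)
    have h1 : ∑ i ∈ t, (a i + 1) ≤ T + 3 := by
      calc ∑ i ∈ t, (a i + 1) ≤ ∑ i ∈ S b, (a i + 1) :=
            Finset.sum_le_sum_of_subset hts
        _ = T + 3 := hb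
    have h2 : 4 * (T + 3) < 4 * ∑ i ∈ t, (a i + 1) := by
      rw [Finset.mul_sum]
      calc 4 * (T + 3) < ∑ _i ∈ t, (T + 5) := by
            rw [Finset.sum_const, htc, smul_eq_mul]; omega
        _ ≤ ∑ i ∈ t, 4 * (a i + 1) := by
            refine Finset.sum_le_sum fun i _ => ?_
            have := hlow i; omega
    omega
  -- card ≥ 3
  have hne : (S b).Nonempty := by
    rw [← Finset.card_pos]
    by_contra h
    push_neg at h
    have h0 : S b = ∅ := Finset.card_eq_zero.mp (Nat.le_zero.mp h)
    rw [h0] at hb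
    simp at hb
  have hcard_ge : 3 ≤ (S b).card := by
    by_contra h
    push_neg at h
    have h2 : 2 * (T + 3) < (S b).card * (T + 2) := by
      calc 2 * (T + 3) = 2 * ∑ i ∈ S b, (a i + 1) := by rw [hb]
        _ = ∑ i ∈ S b, (2 * a i + 2) := by rw [Finset.mul_sum]; exact Finset.sum_congr rfl fun i _ => by ring
        _ < ∑ _i ∈ S b, (T + 2) := by
            refine Finset.sum_lt_sum_of_nonempty hne fun i _ => ?_
            have := hhigh i; omega
        _ = (S b).card * (T + 2) := by rw [Finset.sum_const, smul_eq_mul]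
    have : (S b).card ≤ 2 := by omega
    nlinarith
  have hcard : (S b).card = 3 := le_antisymm hcard_le hcard_ge
  refine ⟨hcard, ?_⟩
  have : ∑ i ∈ S b, (a i + 1) = (∑ i ∈ S b, a i) + (S b).card := by
    rw [Finset.sum_add_distrib, Finset.sum_const, smul_eq_mul, mul_one]
  omega
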